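/- Let A be a symmetric N×N matrix with ⟨Aξ,ξ⟩ ≥ θ|ξ|², let ν be a unit vector, μ := ⟨Aν,ν⟩, and B v := A v − (⟨Aν,v⟩/μ) Aν. If moreover ‖A − Id‖ ≤ ε with (√N/θ) ε ≤ θ/2, then ⟨Bξ,ξ⟩ ≥ (θ/2)|ξ|² for every ξ orthogonal to ν. -/

import Mathlib

open scoped RealInnerProductSpace

/-- With `A` symmetric and elliptic with constant `θ`, `ν` a unit vector, `μ = ⟨Aν,ν⟩`,
`B v = A v − (⟨Aν,v⟩/μ) A ν`, if `‖A − Id‖ ≤ ε` (operator norm) with `(√N/θ) ε ≤ θ/2`,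
then `⟨Bξ,ξ⟩ ≥ (θ/2)‖ξ‖²` for every `ξ ⊥ ν`. -/
theorem B_operator_elliptic (N : ℕ) (θ ε : ℝ) (hθ : 0 < θ) (hε : 0 ≤ ε)
    (A : Matrix (Fin N) (Fin N) ℝ) (hA : A.IsSymm)
    (hell : ∀ ξ : EuclideanSpace ℝ (Fin N),
      θ * ‖ξ‖ ^ 2 ≤ ⟪Matrix.toEuclideanCLM (𝕜 := ℝ) A ξ, ξ⟫)
    (ν : EuclideanSpace ℝ (Fin N)) (hν : ‖ν‖ = 1)
    (hnear : ‖(Matrix.toEuclideanCLM (𝕜 := ℝ) (A - 1) : EuclideanSpace ℝ (Fin N) →L[ℝ] EuclideanSpace ℝ (Fin N))‖ ≤ ε)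
    (hsmall : Real.sqrt N / θ * ε ≤ θ / 2) :
    ∀ ξ : EuclideanSpace ℝ (Fin N), ⟪ξ, ν⟫ = 0 →
      θ / 2 * ‖ξ‖ ^ 2 ≤
        ⟪Matrix.toEuclideanCLM (𝕜 := ℝ) A ξ -
            (⟪Matrix.toEuclideanCLM (𝕜 := ℝ) A ν, ξ⟫ /
              ⟪Matrix.toEuclideanCLM (𝕜 := ℝ) A ν, ν⟫) •
              Matrix.toEuclideanCLM (𝕜 := ℝ) A ν, ξ⟫ := by
  intro ξ hξν
  set T := Matrix.toEuclideanCLM (𝕜 := ℝ) A with hT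
  have hherm : A.IsHermitian := hA
  have hsymL := (Matrix.isHermitian_iff_isSymmetric).mp hherm
  have hsym : ∀ x y : EuclideanSpace ℝ (Fin N), ⟪T x, y⟫ = ⟪x, T y⟫ := by
    intro x y
    have := hsymL x y
    exact this
  set μ := ⟪T ν, ν⟫ with hμdef
  set q := ⟪T ν, ξ⟫ with hqdef
  have hνν : ⟪ν, ν⟫ = (1:ℝ) := by
    rw [real_inner_self_eq_norm_sq, hν]; norm_num
  have hνξ : ⟪ν, ξ⟫ = 0 := by rw [real_inner_comm]; exact hξν
  have hμθ : θ ≤ μ := by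
    have := hell ν
    rw [hν] at this; simpa using this
  have hμpos : 0 < μ := lt_of_lt_of_le hθ hμθ
  set r := ⟪T ξ, ξ⟫ - θ * ‖ξ‖ ^ 2 with hrdef
  have hr : 0 ≤ r := by have := hell ξ; rw [hrdef]; linarith
  have hp : 0 ≤ μ - θ := by linarith
  have hquad : ∀ t : ℝ, 0 ≤ (μ - θ) + 2 * t * q + t ^ 2 * r := by
    intro t
    have h0 := hell (ν + t • ξ)
    have hexp : ⟪T (ν + t • ξ), ν + t • ξ⟫
        = μ + 2 * t * q + t ^ 2 * ⟪T ξ, ξ⟫ := by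
      rw [map_add, map_smul]
      simp only [inner_add_left, inner_add_right, real_inner_smul_left, real_inner_smul_right]
      have h1 : ⟪T ξ, ν⟫ = q := by rw [hsym, real_inner_comm]
      rw [h1, hμdef, hqdef]; ring
    have hnorm : ‖ν + t • ξ‖ ^ 2 = 1 + t ^ 2 * ‖ξ‖ ^ 2 := by
      rw [← real_inner_self_eq_norm_sq]
      simp only [inner_add_left, inner_add_right, real_inner_smul_left, real_inner_smul_right]
      rw [hνν, hνξ, hξν, real_inner_self_eq_norm_sq]
      ring
    rw [hexp, hnorm] at h0
    rw [hrdef]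
    nlinarith [h0]
  have hcs : q ^ 2 ≤ (μ - θ) * r := by
    rcases eq_or_lt_of_le hr with h0 | hrpos
    · have hq0 : q = 0 := by
        by_contra hq
        have ht := hquad (-(μ - θ + 1) / (2 * q))
        rw [← h0] at ht
        have h2 : 2 * (-(μ - θ + 1) / (2 * q)) * q = -(μ - θ + 1) := by
          field_simp
        rw [h2] at ht
        simp at ht
        linarith
      rw [hq0, ← h0]; ring_nf; simp
    · have ht := hquad (-q / r)
      have hr0 : r ≠ 0 := ne_of_gt hrpos
      have h1 : 2 * (-q / r) * q + (-q / r) ^ 2 * r = -(q ^ 2 / r) := by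
        field_simp; ring
      have h2 : q ^ 2 / r ≤ μ - θ := by linarith
      exact (div_le_iff₀ hrpos).mp h2
  have hgoal : ⟪T ξ - (q / μ) • T ν, ξ⟫ = ⟪T ξ, ξ⟫ - q / μ * q := by
    rw [inner_sub_left, real_inner_smul_left]
  rw [hgoal]
  have hqq : q ^ 2 / μ ≤ r := by
    rw [div_le_iff₀ hμpos]
    calc q ^ 2 ≤ (μ - θ) * r := hcs
    _ ≤ r * μ := by nlinarith
  have heq : q / μ * q = q ^ 2 / μ := by ring
  rw [heq]
  have hs0 : 0 ≤ ‖ξ‖ ^ 2 := sq_nonneg _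
  nlinarith [mul_nonneg (le_of_lt hθ) hs0]
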